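/- Let G be a graph, C a longest cycle of G with an orientation, {A,B} a partition of V(G) such that every vertex of A is adjacent to every vertex of B, with B ⊆ V(C). Suppose x₁, x₂ ∈ A \ V(C) with x₁x₂ ∈ E(G) and u ∈ B ∩ V(C). Then neither x₁ nor x₂ is adjacent to u⁺ or to u⁺², and consequently u⁺, u⁺² ∈ A. -/

import Mathlib

open SimpleGraph

def IsCycleEmb {V : Type*} (G : SimpleGraph V) (n : ℕ) (f : ZMod n → V) : Prop :=
  3 ≤ n ∧ Function.Injective f ∧ ∀ i : ZMod n, G.Adj (f i) (f (i + 1))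

def IsLongestCycle {V : Type*} (G : SimpleGraph V) (n : ℕ) (f : ZMod n → V) : Prop :=
  IsCycleEmb G n f ∧ ∀ (m : ℕ) (g : ZMod m → V), IsCycleEmb G m g → m ≤ n

def IsDominatingCycle {V : Type*} (G : SimpleGraph V) (n : ℕ) (f : ZMod n → V) : Prop :=
  IsCycleEmb G n f ∧ ∀ a b : V, G.Adj a b → a ∈ Set.range f ∨ b ∈ Set.range f

def IsCompOutside {V : Type*} (G : SimpleGraph V) (C : Set V) (H : Set V) : Prop :=
  H.Nonempty ∧ Disjoint H C ∧ (G.induce H).Connected ∧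
    ∀ a ∈ H, ∀ b : V, G.Adj a b → b ∉ C → b ∈ H

def TwoConnected {V : Type*} (G : SimpleGraph V) : Prop :=
  3 ≤ Nat.card V ∧ ∀ v : V, (G.induce ({v}ᶜ : Set V)).Connected

def KConnected {V : Type*} (G : SimpleGraph V) (k : ℕ) : Prop :=
  k < Nat.card V ∧ ∀ S : Set V, S.ncard < k → (G.induce (Sᶜ : Set V)).Connected

def HFree {W V : Type*} (H : SimpleGraph W) (G : SimpleGraph V) : Prop :=
  ¬ Nonempty (H ↪g G)

def IsCompleteMultipartite {V : Type*} (G : SimpleGraph V) : Prop :=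
  ∃ s : Setoid V, ∀ a b : V, G.Adj a b ↔ ¬ s.r a b

/-- `W = K₁ + 3K₂`: vertex 0 joined to three disjoint edges 12, 34, 56. -/
def Wgraph : SimpleGraph (Fin 7) :=
  SimpleGraph.fromRel (fun a b =>
    a = 0 ∨ (a = 1 ∧ b = 2) ∨ (a = 3 ∧ b = 4) ∨ (a = 5 ∧ b = 6))

/-- `Z₁`, the paw: triangle 012 plus pendant edge 23. -/
def pawGraph : SimpleGraph (Fin 4) :=
  SimpleGraph.fromRel (fun a b =>
    (a = 0 ∧ b = 1) ∨ (a = 1 ∧ b = 2) ∨ (a = 0 ∧ b = 2) ∨ (a = 2 ∧ b = 3))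

/-- The claw `K₁,₃`. -/
def clawGraph : SimpleGraph (Fin 4) :=
  SimpleGraph.fromRel (fun a _ => a = 0)

/-- `K₄` minus the edge 23. -/
def K4minusGraph : SimpleGraph (Fin 4) :=
  SimpleGraph.fromRel (fun a b => ¬((a = 2 ∧ b = 3) ∨ (a = 3 ∧ b = 2)))

/-- `K₁,₃**`: spider with legs of lengths 2, 2, 1 (center 0, legs 0-1-2, 0-3-4, 0-5). -/
def spider221 : SimpleGraph (Fin 6) :=
  SimpleGraph.fromRel (fun a b =>
    (a = 0 ∧ b = 1) ∨ (a = 1 ∧ b = 2) ∨ (a = 0 ∧ b = 3) ∨ (a = 3 ∧ b = 4) ∨ (a = 0 ∧ b = 5))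

/-- The theta graph `A_s`: two vertices joined by three internally disjoint paths,
each with `s` internal vertices. -/
def thetaGraph (s : ℕ) : SimpleGraph (Fin 2 ⊕ Fin 3 × Fin s) :=
  SimpleGraph.fromRel (fun a b =>
    (∃ (j : Fin 3) (k : Fin s), a = Sum.inl 0 ∧ b = Sum.inr (j, k) ∧ (k : ℕ) = 0) ∨
    (∃ (j : Fin 3) (k : Fin s), a = Sum.inl 1 ∧ b = Sum.inr (j, k) ∧ (k : ℕ) = s - 1) ∨
    (∃ (j : Fin 3) (k l : Fin s), a = Sum.inr (j, k) ∧ b = Sum.inr (j, l) ∧ (l : ℕ) = (k : ℕ) + 1))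

/-- `A′_s = 2K₁ + sK₂`. -/
def APrime (s : ℕ) : SimpleGraph (Fin 2 ⊕ Fin s × Fin 2) :=
  SimpleGraph.fromRel (fun a b =>
    (∃ (i : Fin 2) (x : Fin s × Fin 2), a = Sum.inl i ∧ b = Sum.inr x) ∨
    (∃ j : Fin s, a = Sum.inr (j, 0) ∧ b = Sum.inr (j, 1)))

/-- `A″_s = K₂ + (2K₂ ∪ K_s)`. -/
def ADoublePrime (s : ℕ) : SimpleGraph (Fin 2 ⊕ (Fin 2 × Fin 2 ⊕ Fin s)) :=
  SimpleGraph.fromRel (fun a b =>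
    (∃ i : Fin 2, a = Sum.inl i) ∨
    (∃ j : Fin 2, a = Sum.inr (Sum.inl (j, 0)) ∧ b = Sum.inr (Sum.inl (j, 1))) ∨
    (∃ p q : Fin s, a = Sum.inr (Sum.inr p) ∧ b = Sum.inr (Sum.inr q)))

/-- `A_s⁽¹⁾`: two disjoint triangles joined by three vertex-disjoint paths with `s`
internal vertices each. -/
def AOne (s : ℕ) : SimpleGraph (Fin 2 × Fin 3 ⊕ Fin 3 × Fin s) :=
  SimpleGraph.fromRel (fun a b =>
    (∃ (t : Fin 2) (i j : Fin 3), a = Sum.inl (t, i) ∧ b = Sum.inl (t, j)) ∨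
    (∃ (j : Fin 3) (k : Fin s), a = Sum.inl (0, j) ∧ b = Sum.inr (j, k) ∧ (k : ℕ) = 0) ∨
    (∃ (j : Fin 3) (k : Fin s), a = Sum.inl (1, j) ∧ b = Sum.inr (j, k) ∧ (k : ℕ) = s - 1) ∨
    (∃ (j : Fin 3) (k l : Fin s), a = Sum.inr (j, k) ∧ b = Sum.inr (j, l) ∧ (l : ℕ) = (k : ℕ) + 1))

/-- `A_s⁽⁵⁾`: vertices `x₁, x₂` and `y_{i,j}`; edges `x₁x₂`, `y_{1,j}y_{2,j}`, `x_i y_{i,j}`. -/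
def AFive (s : ℕ) : SimpleGraph (Fin 2 ⊕ Fin 2 × Fin s) :=
  SimpleGraph.fromRel (fun a b =>
    (a = Sum.inl 0 ∧ b = Sum.inl 1) ∨
    (∃ j : Fin s, a = Sum.inr (0, j) ∧ b = Sum.inr (1, j)) ∨
    (∃ (i : Fin 2) (j : Fin s), a = Sum.inl i ∧ b = Sum.inr (i, j)))

private lemma zmod_cast_inj {n : ℕ} (hn : 3 ≤ n) {a b : ℕ} (ha1 : 1 ≤ a) (ha2 : a ≤ n)
    (hb1 : 1 ≤ b) (hb2 : b ≤ n) (h : (a : ZMod n) = (b : ZMod n)) : a = b := by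
  have := congrArg ZMod.val h
  rw [ZMod.val_natCast, ZMod.val_natCast] at this
  have ha : a % n = if a = n then 0 else a := by
    split
    · simp [*, Nat.mod_self]
    · exact Nat.mod_eq_of_lt (by omega)
  have hb : b % n = if b = n then 0 else b := by
    split
    · simp [*, Nat.mod_self]
    · exact Nat.mod_eq_of_lt (by omega)
  split at ha <;> split at hb <;> omega

private lemma insert_one {V : Type*} {G : SimpleGraph V} {n : ℕ} {f : ZMod n → V}
    (hf : IsCycleEmb G n f) (i : ZMod n) {x : V} (hx : x ∉ Set.range f)
    (h1 : G.Adj x (f i)) (h2 : G.Adj x (f (i + 1))) :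
    ∃ g : ZMod (n + 1) → V, IsCycleEmb G (n + 1) g := by
  obtain ⟨hn, hinj, hadj⟩ := hf
  haveI : NeZero n := ⟨by omega⟩
  classical
  refine ⟨fun j => if j.val = 0 then x else f (i + (j.val : ZMod n)), by omega, ?_, ?_⟩
  · intro j k h
    simp only at h
    have hj := ZMod.val_lt j
    have hk := ZMod.val_lt k
    by_cases hj0 : j.val = 0 <;> by_cases hk0 : k.val = 0 <;> simp [hj0, hk0] at h
    · exact ZMod.val_injective _ (hj0.trans hk0.symm)
    · exact absurd ⟨_, h.symm⟩ hx
    · exact absurd ⟨_, h⟩ hx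
    · apply ZMod.val_injective
      have := add_left_cancel (hinj h)
      exact zmod_cast_inj hn (by omega) (by omega) (by omega) (by omega) this
  · intro j
    have hj := ZMod.val_lt j
    haveI : Fact (1 < n + 1) := ⟨by omega⟩
    have hv1 : (1 : ZMod (n+1)).val = 1 := ZMod.val_one _
    have hvadd : (j + 1).val = (j.val + 1) % (n + 1) := by
      rw [ZMod.val_add, hv1]
    by_cases hj0 : j.val = 0
    · have hj' : j = 0 := ZMod.val_injective _ (by simp [hj0])
      subst hj'
      have h01 : (0 + 1 : ZMod (n+1)).val = 1 := by rw [zero_add, hv1]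
      simp only [h01, ZMod.val_zero, if_pos rfl, if_neg one_ne_zero, Nat.cast_one]
      exact h2
    · by_cases hjn : j.val = n
      · have hj' : j = (n : ZMod (n+1)) := by
          apply ZMod.val_injective
          rw [ZMod.val_natCast, Nat.mod_eq_of_lt (by omega), hjn]
        have hj1 : j + 1 = 0 := by
          rw [hj']
          rw [← Nat.cast_add_one, ZMod.natCast_self]
        simp only [hj1, hj0, hjn]
        simp only [ZMod.natCast_self, add_zero, ZMod.val_zero, if_pos rfl, if_neg (by omega : ¬ n = 0)]
        exact h1.symm
      · have hv : (j + 1).val = j.val + 1 := by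
          rw [hvadd, Nat.mod_eq_of_lt (by omega)]
        simp only [hv, hj0, if_neg (by omega : ¬ j.val + 1 = 0), if_neg hj0]
        have : ((j.val + 1 : ℕ) : ZMod n) = (j.val : ZMod n) + 1 := by push_cast; ring
        rw [this, ← add_assoc]
        exact hadj _

private lemma insert_two {V : Type*} {G : SimpleGraph V} {n : ℕ} {f : ZMod n → V}
    (hf : IsCycleEmb G n f) (i : ZMod n) {x₁ x₂ : V}
    (hx₁ : x₁ ∉ Set.range f) (hx₂ : x₂ ∉ Set.range f) (h12 : G.Adj x₁ x₂)
    (h1 : G.Adj x₂ (f i)) (h2 : G.Adj x₁ (f (i + 2))) :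
    ∃ g : ZMod (n + 1) → V, IsCycleEmb G (n + 1) g := by
  obtain ⟨hn, hinj, hadj⟩ := hf
  haveI : NeZero n := ⟨by omega⟩
  classical
  refine ⟨fun j => if j.val = 0 then x₂ else if j.val = 1 then x₁
    else f (i + (j.val : ZMod n)), by omega, ?_, ?_⟩
  · intro j k h
    simp only at h
    have hj := ZMod.val_lt j
    have hk := ZMod.val_lt k
    by_cases hj0 : j.val = 0 <;> by_cases hk0 : k.val = 0 <;>
      by_cases hj1 : j.val = 1 <;> by_cases hk1 : k.val = 1 <;>
      simp [hj0, hk0, hj1, hk1] at h <;>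
      first
        | exact ZMod.val_injective _ (by omega)
        | exact absurd h.symm (fun hh => hx₁ ⟨_, hh⟩)
        | exact absurd h (fun hh => hx₁ ⟨_, hh⟩)
        | exact absurd h.symm (fun hh => hx₂ ⟨_, hh⟩)
        | exact absurd h (fun hh => hx₂ ⟨_, hh⟩)
        | exact absurd h h12.ne
        | exact absurd h h12.ne'
        | exact ZMod.val_injective _ (zmod_cast_inj hn (by omega) (by omega)
            (by omega) (by omega) (add_left_cancel (hinj h)))
  · intro j
    have hj := ZMod.val_lt j
    haveI : Fact (1 < n + 1) := ⟨by omega⟩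
    have hv1 : (1 : ZMod (n+1)).val = 1 := ZMod.val_one _
    have hvadd : (j + 1).val = (j.val + 1) % (n + 1) := by
      rw [ZMod.val_add, hv1]
    by_cases hj0 : j.val = 0
    · have hj' : j = 0 := ZMod.val_injective _ (by simp [hj0])
      subst hj'
      have h01 : (0 + 1 : ZMod (n+1)).val = 1 := by rw [zero_add, hv1]
      simp only [h01, ZMod.val_zero, if_pos rfl, if_neg one_ne_zero]
      exact h12.symm
    · by_cases hj1 : j.val = 1
      · have hv : (j + 1).val = 2 := by rw [hvadd, hj1, Nat.mod_eq_of_lt (by omega)]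
        have hc2 : ((2 : ℕ) : ZMod n) = 2 := by push_cast; ring
        simp only [hv, hj0, hj1, if_neg (by omega : ¬ (2:ℕ) = 0),
          if_neg (by omega : ¬ (2:ℕ) = 1), if_neg one_ne_zero, if_pos rfl, hc2]
        exact h2
      · by_cases hjn : j.val = n
        · have hj1' : j + 1 = 0 := by
            have hj' : j = (n : ZMod (n+1)) := by
              apply ZMod.val_injective
              rw [ZMod.val_natCast, Nat.mod_eq_of_lt (by omega), hjn]
            rw [hj', ← Nat.cast_add_one, ZMod.natCast_self]
          simp only [hj1', hj0, hj1, hjn, ZMod.natCast_self, add_zero, ZMod.val_zero,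
            if_pos rfl, if_neg (by omega : ¬ n = 0), if_neg (by omega : ¬ n = 1)]
          exact h1.symm
        · have hv : (j + 1).val = j.val + 1 := by
            rw [hvadd, Nat.mod_eq_of_lt (by omega)]
          simp only [hv, if_neg hj0, if_neg hj1, if_neg (by omega : ¬ j.val + 1 = 0),
            if_neg (by omega : ¬ j.val + 1 = 1)]
          have : ((j.val + 1 : ℕ) : ZMod n) = (j.val : ZMod n) + 1 := by push_cast; ring
          rw [this, ← add_assoc]
          exact hadj _

/-- With a complete-join partition `{A, B}`, `B ⊆ V(C)` for a longest cycle `C`,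
adjacent `x₁, x₂ ∈ A \ V(C)` and `u = f i ∈ B ∩ V(C)`: neither `x₁` nor `x₂` is
adjacent to `u⁺` or `u⁺²`, and consequently `u⁺, u⁺² ∈ A`. -/
theorem stmt15 {V : Type*} [Fintype V] (G : SimpleGraph V)
    (A B : Set V) (hpart : A ∪ B = Set.univ) (hdisj : Disjoint A B)
    (hjoin : ∀ a ∈ A, ∀ b ∈ B, G.Adj a b)
    (n : ℕ) (f : ZMod n → V) (hC : IsLongestCycle G n f)
    (hBC : B ⊆ Set.range f)
    (x₁ x₂ : V) (hx₁ : x₁ ∈ A) (hx₂ : x₂ ∈ A)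
    (hx₁C : x₁ ∉ Set.range f) (hx₂C : x₂ ∉ Set.range f)
    (hxadj : G.Adj x₁ x₂)
    (i : ZMod n) (hu : f i ∈ B) :
    ¬ G.Adj x₁ (f (i + 1)) ∧ ¬ G.Adj x₁ (f (i + 2)) ∧
    ¬ G.Adj x₂ (f (i + 1)) ∧ ¬ G.Adj x₂ (f (i + 2)) ∧
    f (i + 1) ∈ A ∧ f (i + 2) ∈ A := by
  have hf := hC.1
  have hux₁ : G.Adj x₁ (f i) := hjoin x₁ hx₁ (f i) hu
  have hux₂ : G.Adj x₂ (f i) := hjoin x₂ hx₂ (f i) hu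
  have n11 : ¬ G.Adj x₁ (f (i + 1)) := by
    intro h
    obtain ⟨g, hg⟩ := insert_one hf i hx₁C hux₁ h
    have := hC.2 _ g hg
    omega
  have n21 : ¬ G.Adj x₂ (f (i + 1)) := by
    intro h
    obtain ⟨g, hg⟩ := insert_one hf i hx₂C hux₂ h
    have := hC.2 _ g hg
    omega
  have n12 : ¬ G.Adj x₁ (f (i + 2)) := by
    intro h
    obtain ⟨g, hg⟩ := insert_two hf i hx₁C hx₂C hxadj hux₂ h
    have := hC.2 _ g hg
    omega
  have n22 : ¬ G.Adj x₂ (f (i + 2)) := by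
    intro h
    obtain ⟨g, hg⟩ := insert_two hf i hx₂C hx₁C hxadj.symm hux₁ h
    have := hC.2 _ g hg
    omega
  have hA1 : f (i + 1) ∈ A := by
    have hmem : f (i + 1) ∈ A ∪ B := by rw [hpart]; trivial
    rcases hmem with h | h
    · exact h
    · exact absurd (hjoin x₁ hx₁ _ h) n11
  have hA2 : f (i + 2) ∈ A := by
    have hmem : f (i + 2) ∈ A ∪ B := by rw [hpart]; trivial
    rcases hmem with h | h
    · exact h
    · exact absurd (hjoin x₁ hx₁ _ h) n12
  exact ⟨n11, n12, n21, n22, hA1, hA2⟩
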